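/- For every r ≥ 1 and every block boundary i = D(j) (1 ≤ j ≤ t), the double coset I_r t_i I_r ⊆ GL_n(ℚ_p) decomposes as the disjoint union I_r t_i I_r = ⨆_{B'} u(B')·t_i·I_r, where B' runs over all i×(n−i) matrices with entries in {0, 1, …, p−1}; in particular, I_r t_i I_r is the union of exactly p^{i(n−i)} distinct left cosets of I_r, and this set of coset representatives does not depend on r. -/
import Mathlib


/-!
STATEMENT 5: For every r ≥ 1 and every block boundary i = D(j) (1 ≤ j ≤ t), the double
coset I_r t_i I_r ⊆ GL_n(ℚ_p) decomposes as the disjoint union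
I_r t_i I_r = ⨆_{B'} u(B')·t_i·I_r, where B' runs over all i×(n−i) matrices with entries
in {0, 1, …, p−1}; in particular, I_r t_i I_r is the union of exactly p^{i(n−i)} distinct
left cosets of I_r (and this set of coset representatives does not depend on r).
-/

open Matrix

noncomputable section
namespace PIw

/-- Partial sums of the partition: `Dsum nn j = n_1 + ⋯ + n_j` (`nn` is 0-indexed). -/
def Dsum {t : ℕ} (nn : Fin t → ℕ) (j : ℕ) : ℕ :=
  ∑ i ∈ Finset.range j, if h : i < t then nn ⟨i, h⟩ else 0

/-- Index (0-indexed) of the block containing position `k`. -/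
def blkOf {t : ℕ} (nn : Fin t → ℕ) (k : ℕ) : ℕ :=
  ((Finset.range t).filter fun j => Dsum nn (j + 1) ≤ k).card

/-- The block function on `Fin n`. -/
def bfun {t : ℕ} (nn : Fin t → ℕ) : Fin (Dsum nn t) → ℕ := fun k => blkOf nn (k : ℕ)

/-- Block upper triangular (entries strictly below the diagonal blocks vanish). -/
def IsBlockUpper {t : ℕ} (nn : Fin t → ℕ) {R : Type*} [CommRing R]
    (M : Matrix (Fin (Dsum nn t)) (Fin (Dsum nn t)) R) : Prop :=
  M.BlockTriangular (bfun nn)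

/-- Block upper triangular with identity diagonal blocks. -/
def IsBlockUnipotent {t : ℕ} (nn : Fin t → ℕ) {R : Type*} [CommRing R]
    (M : Matrix (Fin (Dsum nn t)) (Fin (Dsum nn t)) R) : Prop :=
  IsBlockUpper nn M ∧
    ∀ k l, bfun nn k = bfun nn l → M k l = if k = l then 1 else 0

variable (p : ℕ) [Fact p.Prime]

/-- Entrywise reduction mod `p^r`. -/
def redMat (r : ℕ) {N : ℕ} (M : Matrix (Fin N) (Fin N) ℤ_[p]) :
    Matrix (Fin N) (Fin N) (ZMod (p ^ r)) :=
  M.map (PadicInt.toZModPow r)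

/-- Membership in the pro-`p` `P`-Iwahori subgroup `I_r`. -/
def memIw {t : ℕ} (nn : Fin t → ℕ) (r : ℕ) (g : GL (Fin (Dsum nn t)) ℤ_[p]) : Prop :=
  IsBlockUnipotent nn (redMat p r g.val)

/-- Coefficient-wise inclusion `ℤ_p → ℚ_p` on matrices. -/
def toQ {N : ℕ} (M : Matrix (Fin N) (Fin N) ℤ_[p]) : Matrix (Fin N) (Fin N) ℚ_[p] :=
  M.map (fun x => (x : ℚ_[p]))

/-- The matrix `t_i = diag(p·1_i, 1_{n-i})` in `GL_n(ℚ_p)`. -/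
def tMat (N i : ℕ) : Matrix (Fin N) (Fin N) ℚ_[p] :=
  Matrix.diagonal fun k => if (k : ℕ) < i then (p : ℚ_[p]) else 1

/-- The unipotent matrix `u(B) = (1_i, B; 0, 1_{n-i})`, where `B` is an `i × (n-i)`
matrix of natural numbers (viewed in `ℚ_p`). -/
def uMat (N i : ℕ) (B : Matrix (Fin i) (Fin (N - i)) ℕ) :
    Matrix (Fin N) (Fin N) ℚ_[p] := fun k l =>
  if h : (k : ℕ) < i ∧ i ≤ (l : ℕ) then
    (B ⟨(k : ℕ), h.1⟩ ⟨(l : ℕ) - i, Nat.sub_lt_sub_right h.2 l.isLt⟩ : ℚ_[p])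
  else if k = l then 1 else 0


section Aux

/-! ### Auxiliary machinery -/


/-- General block-unipotent predicate. -/
def UnipGen {ι : Type*} [DecidableEq ι] (b : ι → ℕ) {R : Type*} [CommRing R]
    (M : Matrix ι ι R) : Prop :=
  M.BlockTriangular b ∧ ∀ k l, b k = b l → M k l = if k = l then 1 else 0

theorem UnipGen.one {ι : Type*} [DecidableEq ι] (b : ι → ℕ) {R : Type*} [CommRing R] :
    UnipGen b (1 : Matrix ι ι R) :=
  ⟨Matrix.blockTriangular_one, fun _ _ _ => Matrix.one_apply⟩

theorem UnipGen.mul {ι : Type*} [DecidableEq ι] [Fintype ι] {b : ι → ℕ} {R : Type*} [CommRing R]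
    {M M' : Matrix ι ι R} (hM : UnipGen b M) (hM' : UnipGen b M') : UnipGen b (M * M') := by
  refine ⟨hM.1.mul hM'.1, fun k l hkl => ?_⟩
  rw [Matrix.mul_apply]
  have h : ∀ m, M k m * M' m l = (if k = m then (1:R) else 0) * M' m l := by
    intro m
    rcases lt_trichotomy (b m) (b k) with h | h | h
    · rw [hM.1 h, if_neg (by rintro rfl; exact lt_irrefl _ h)]
    · rw [hM.2 k m h.symm]
    · rw [hM'.1 (hkl ▸ h), mul_zero, mul_zero]
  rw [Finset.sum_congr rfl fun m _ => h m]
  simp [hM'.2 k l hkl]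

theorem UnipGen.map {ι : Type*} [DecidableEq ι] {b : ι → ℕ} {R S : Type*} [CommRing R]
    [CommRing S] (f : R →+* S) {M : Matrix ι ι R} (h : UnipGen b M) : UnipGen b (M.map f) := by
  refine ⟨fun k l hlk => ?_, fun k l hkl => ?_⟩
  · simp [Matrix.map_apply, h.1 hlk]
  · rw [Matrix.map_apply, h.2 k l hkl]
    split <;> simp

theorem UnipGen.det_eq_one {ι : Type*} [DecidableEq ι] [Fintype ι] {b : ι → ℕ} {R : Type*}
    [CommRing R] {M : Matrix ι ι R} (h : UnipGen b M) : M.det = 1 := by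
  rw [h.1.det]
  refine Finset.prod_eq_one fun a _ => ?_
  have : M.toSquareBlock b a = 1 := by
    ext k l
    have hkl := h.2 k.1 l.1 (k.2.trans l.2.symm)
    simp only [Matrix.toSquareBlock_def, Matrix.of_apply, hkl, Matrix.one_apply,
      Subtype.ext_iff]
  rw [this, Matrix.det_one]

theorem UnipGen.congr_lower {ι : Type*} [DecidableEq ι] {b : ι → ℕ} {R : Type*} [CommRing R]
    {M M' : Matrix ι ι R} (h : ∀ k l, ¬ b k < b l → M k l = M' k l) (hM' : UnipGen b M') :
    UnipGen b M := by
  refine ⟨fun k l hlk => ?_, fun k l hkl => ?_⟩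
  · rw [h k l (lt_asymm hlk)]; exact hM'.1 hlk
  · rw [h k l (by rw [hkl]; exact lt_irrefl _)]; exact hM'.2 k l hkl

theorem sum_restrict {β : Type*} [AddCommMonoid β] {N i : ℕ} (hiN : i ≤ N) (f : Fin N → β)
    (hf : ∀ m : Fin N, (m : ℕ) < i → f m = 0) :
    ∑ m, f m = ∑ m' : Fin (N - i), f ⟨i + m', by omega⟩ := by
  classical
  let emb2 : Fin (N - i) → Fin N := fun m => ⟨i + m, by omega⟩
  have hinj : ∀ x ∈ Finset.univ, ∀ y ∈ Finset.univ, emb2 x = emb2 y → x = y := by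
    intro x _ y _ hxy
    have := congrArg (fun z : Fin N => (z : ℕ)) hxy
    simp only [emb2] at this
    exact Fin.ext (by omega)
  rw [show (Finset.univ : Finset (Fin N)).sum f
      = ∑ m ∈ Finset.univ.image emb2, f m from ?_, Finset.sum_image hinj]
  refine (Finset.sum_subset (Finset.subset_univ _) ?_).symm
  intro x _ hx
  refine hf x ?_
  by_contra hxi
  refine hx ?_
  have hile : i ≤ (x : ℕ) := by omega
  refine Finset.mem_image.2 ⟨⟨(x : ℕ) - i, by omega⟩, Finset.mem_univ _, ?_⟩
  exact Fin.ext (by simp [emb2]; omega)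



variable (p : ℕ) [Fact p.Prime]

/-- The strictly-upper corner matrix over `ℤ_p` whose corner is `B`. -/
def wMat (N i : ℕ) (B : Matrix (Fin i) (Fin (N - i)) ℕ) :
    Matrix (Fin N) (Fin N) ℤ_[p] := fun k l =>
  if h : (k : ℕ) < i ∧ i ≤ (l : ℕ) then
    (B ⟨(k : ℕ), h.1⟩ ⟨(l : ℕ) - i, Nat.sub_lt_sub_right h.2 l.isLt⟩ : ℤ_[p]) else 0

theorem toQ_mul {N : ℕ} (M M' : Matrix (Fin N) (Fin N) ℤ_[p]) :
    toQ p (M * M') = toQ p M * toQ p M' := by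
  have : toQ p (M * M') = (M * M').map (PadicInt.Coe.ringHom (p := p)) := rfl
  rw [this, Matrix.map_mul]; rfl

theorem wMat_mul_wMat {N i : ℕ} (B B' : Matrix (Fin i) (Fin (N - i)) ℕ) :
    wMat p N i B * wMat p N i B' = 0 := by
  ext k l
  rw [Matrix.mul_apply, Matrix.zero_apply]
  refine Finset.sum_eq_zero fun m _ => ?_
  by_cases h : (k : ℕ) < i ∧ i ≤ (m : ℕ)
  · have h2 : ¬ ((m : ℕ) < i ∧ i ≤ (l : ℕ)) := fun h2 => absurd h.2 (by omega)
    rw [show wMat p N i B' m l = 0 from dif_neg h2, mul_zero]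
  · rw [show wMat p N i B k m = 0 from dif_neg h, zero_mul]

theorem uMat_eq_toQ {N i : ℕ} (B : Matrix (Fin i) (Fin (N - i)) ℕ) :
    uMat p N i B = toQ p (1 + wMat p N i B) := by
  ext k l
  rw [uMat, toQ, Matrix.map_apply, Matrix.add_apply, wMat, Matrix.one_apply]
  by_cases h : (k : ℕ) < i ∧ i ≤ (l : ℕ)
  · rw [dif_pos h, dif_pos h, if_neg (by rintro rfl; omega)]
    push_cast
    rw [zero_add]
  · rw [dif_neg h, dif_neg h]
    split <;> push_cast <;> simp

theorem one_add_wMat_mul {N i : ℕ} (B : Matrix (Fin i) (Fin (N - i)) ℕ) :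
    (1 + wMat p N i B) * (1 - wMat p N i B) = 1 ∧
    (1 - wMat p N i B) * (1 + wMat p N i B) = 1 := by
  have h := wMat_mul_wMat p (i := i) (N := N) B B
  constructor
  · have : (1 + wMat p N i B) * (1 - wMat p N i B)
        = 1 - wMat p N i B * wMat p N i B := by noncomm_ring
    rw [this, h, sub_zero]
  · have : (1 - wMat p N i B) * (1 + wMat p N i B)
        = 1 - wMat p N i B * wMat p N i B := by noncomm_ring
    rw [this, h, sub_zero]

theorem isUnit_of_toZModPow_one (x : ℤ_[p]) (hx : PadicInt.toZModPow 1 x = 1) : IsUnit x := by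
  haveI : Fact (1 < p ^ 1) := ⟨by simpa using (Fact.out : p.Prime).one_lt⟩
  by_contra h
  rw [PadicInt.not_isUnit_iff, PadicInt.norm_lt_one_iff_dvd] at h
  have : x ∈ RingHom.ker (PadicInt.toZModPow (p := p) 1) := by
    rw [PadicInt.ker_toZModPow, Ideal.mem_span_singleton, pow_one]
    exact_mod_cast h
  rw [RingHom.mem_ker, hx] at this
  exact one_ne_zero this


/-- Candidate for the matrix `c₀` with `t⁻¹ u(-B') a t = c₀`. -/
def cMat {N i : ℕ} (M : Matrix (Fin N) (Fin N) ℤ_[p])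
    (hM : ∀ k l : Fin N, (k : ℕ) < i → i ≤ (l : ℕ) →
      ∃ z : ℤ_[p], (p : ℤ_[p]) * z = M k l) :
    Matrix (Fin N) (Fin N) ℤ_[p] := fun k l =>
  if h : (k : ℕ) < i ∧ i ≤ (l : ℕ) then (hM k l h.1 h.2).choose
  else if (l : ℕ) < i ∧ i ≤ (k : ℕ) then (p : ℤ_[p]) * M k l else M k l

theorem cMat_spec {N i : ℕ} (M : Matrix (Fin N) (Fin N) ℤ_[p])
    (hM : ∀ k l : Fin N, (k : ℕ) < i → i ≤ (l : ℕ) →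
      ∃ z : ℤ_[p], (p : ℤ_[p]) * z = M k l) {k l : Fin N}
    (hk : (k : ℕ) < i) (hl : i ≤ (l : ℕ)) :
    (p : ℤ_[p]) * cMat p M hM k l = M k l := by
  rw [cMat, dif_pos ⟨hk, hl⟩]
  exact (hM k l hk hl).choose_spec

theorem cMat_low {N i : ℕ} (M : Matrix (Fin N) (Fin N) ℤ_[p])
    (hM : ∀ k l : Fin N, (k : ℕ) < i → i ≤ (l : ℕ) →
      ∃ z : ℤ_[p], (p : ℤ_[p]) * z = M k l) {k l : Fin N}
    (h2 : (l : ℕ) < i ∧ i ≤ (k : ℕ)) :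
    cMat p M hM k l = (p : ℤ_[p]) * M k l := by
  rw [cMat, dif_neg (by omega), if_pos h2]

theorem cMat_mid {N i : ℕ} (M : Matrix (Fin N) (Fin N) ℤ_[p])
    (hM : ∀ k l : Fin N, (k : ℕ) < i → i ≤ (l : ℕ) →
      ∃ z : ℤ_[p], (p : ℤ_[p]) * z = M k l) {k l : Fin N}
    (h1 : ¬((k : ℕ) < i ∧ i ≤ (l : ℕ))) (h2 : ¬((l : ℕ) < i ∧ i ≤ (k : ℕ))) :
    cMat p M hM k l = M k l := by
  rw [cMat, dif_neg h1, if_neg h2]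


theorem redMat_mul (r : ℕ) {N : ℕ} (M M' : Matrix (Fin N) (Fin N) ℤ_[p]) :
    redMat p r (M * M') = redMat p r M * redMat p r M' := by
  rw [redMat, redMat, redMat, Matrix.map_mul]

theorem redMat_one (r : ℕ) {N : ℕ} :
    redMat p r (1 : Matrix (Fin N) (Fin N) ℤ_[p]) = 1 :=
  Matrix.map_one _ (map_zero _) (map_one _)

theorem unipGen_redMat_one_add_wMat {N i : ℕ} (b : Fin N → ℕ)
    (hb : ∀ k l : Fin N, (k : ℕ) < i → i ≤ (l : ℕ) → b k < b l) (r : ℕ)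
    (B : Matrix (Fin i) (Fin (N - i)) ℕ) :
    UnipGen b (redMat p r (1 + wMat p N i B)) := by
  constructor
  · intro k l hlk
    rw [redMat, Matrix.map_apply, Matrix.add_apply, Matrix.one_apply,
      if_neg (by rintro rfl; exact lt_irrefl _ hlk),
      show wMat p N i B k l = 0 from dif_neg fun h => absurd (hb k l h.1 h.2) (lt_asymm hlk),
      add_zero, map_zero]
  · intro k l hkl
    rw [redMat, Matrix.map_apply, Matrix.add_apply,
      show wMat p N i B k l = 0 from dif_neg fun h => absurd (hb k l h.1 h.2) (by omega),
      add_zero, Matrix.one_apply]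
    split <;> simp

theorem forward_key {N i : ℕ} (hiN : i ≤ N) (b : Fin N → ℕ)
    (hb : ∀ k l : Fin N, (k : ℕ) < i → i ≤ (l : ℕ) → b k < b l) (r : ℕ) (hr : 1 ≤ r)
    (a : GL (Fin N) ℤ_[p]) (ha : UnipGen b (redMat p r a.val)) :
    ∃ B' : Matrix (Fin i) (Fin (N - i)) ℕ, (∀ k l, B' k l < p) ∧
      ∃ c : GL (Fin N) ℤ_[p], UnipGen b (redMat p r c.val) ∧
        toQ p a.val * tMat p N i = uMat p N i B' * tMat p N i * toQ p c.val := by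
  haveI : Fact (1 < p ^ 1) := ⟨by simpa using (Fact.out : p.Prime).one_lt⟩
  set ρ : ℤ_[p] →+* ZMod (p ^ 1) := PadicInt.toZModPow 1 with hρ
  set abar : Matrix (Fin N) (Fin N) (ZMod (p ^ 1)) := a.val.map ρ with habardef
  have habar : UnipGen b abar := by
    have h2 := ha.map (ZMod.castHom (pow_dvd_pow p hr) (ZMod (p ^ 1)))
    have h3 : (redMat p r a.val).map (ZMod.castHom (pow_dvd_pow p hr) (ZMod (p ^ 1)))
        = abar := by
      rw [redMat, Matrix.map_map, habardef]
      congr 1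
      rw [← RingHom.coe_comp, PadicInt.zmod_cast_comp_toZModPow 1 r hr]
    rwa [h3] at h2
  set emb2 : Fin (N - i) → Fin N := fun m => ⟨i + (m : ℕ), by omega⟩ with hemb2
  set Dbar : Matrix (Fin (N - i)) (Fin (N - i)) (ZMod (p ^ 1)) := abar.submatrix emb2 emb2
    with hDbar
  have hDdet : IsUnit Dbar.det := by
    have hD : UnipGen (b ∘ emb2) Dbar := by
      refine ⟨fun k l h => habar.1 h, fun k l h => ?_⟩
      rw [hDbar, Matrix.submatrix_apply, habar.2 _ _ h]
      by_cases hkl : k = l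
      · subst hkl; simp
      · rw [if_neg hkl, if_neg]
        intro hc
        exact hkl (by
          have := congrArg (fun z : Fin N => (z : ℕ)) hc
          simp only [hemb2] at this
          exact Fin.ext (by omega))
    rw [hD.det_eq_one]; exact isUnit_one
  set Abar : Matrix (Fin i) (Fin (N - i)) (ZMod (p ^ 1)) :=
    fun k l => abar ⟨(k : ℕ), lt_of_lt_of_le k.isLt hiN⟩ (emb2 l) with hAbar
  set Bbar : Matrix (Fin i) (Fin (N - i)) (ZMod (p ^ 1)) := Abar * Dbar⁻¹ with hBbar
  have hBD : Bbar * Dbar = Abar := by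
    rw [hBbar, Matrix.mul_assoc, Matrix.nonsing_inv_mul _ hDdet, Matrix.mul_one]
  set B' : Matrix (Fin i) (Fin (N - i)) ℕ := fun k l => (Bbar k l).val with hB'
  have hBlt : ∀ k l, B' k l < p := by
    intro k l
    have := ZMod.val_lt (Bbar k l)
    simpa using this
  have hBval : ∀ k l, ((B' k l : ℕ) : ZMod (p ^ 1)) = Bbar k l := fun k l =>
    ZMod.natCast_rightInverse (Bbar k l)
  set w : Matrix (Fin N) (Fin N) ℤ_[p] := wMat p N i B' with hw
  have hwzero : ∀ k m : Fin N, ¬((k : ℕ) < i ∧ i ≤ (m : ℕ)) → w k m = 0 := fun k m h =>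
    dif_neg h
  set M : Matrix (Fin N) (Fin N) ℤ_[p] := (1 - w) * a.val with hM
  have hMentry : ∀ k l, M k l = a.val k l - ∑ m, w k m * a.val m l := by
    intro k l
    rw [hM, Matrix.sub_mul, Matrix.one_mul, Matrix.sub_apply, Matrix.mul_apply]
  have hcorner : ∀ k l : Fin N, (k : ℕ) < i → i ≤ (l : ℕ) →
      ∃ z : ℤ_[p], (p : ℤ_[p]) * z = M k l := by
    intro k l hk hl
    have hl' : (l : ℕ) - i < N - i := by omega
    have hemb : emb2 ⟨(l : ℕ) - i, hl'⟩ = l := by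
      refine Fin.ext ?_
      simp only [hemb2]
      omega
    have h0 : ρ (M k l) = 0 := by
      have hsum : ∑ m, ρ (w k m) * abar m l
          = ∑ m' : Fin (N - i), Bbar ⟨(k : ℕ), hk⟩ m' * Dbar m' ⟨(l : ℕ) - i, hl'⟩ := by
        rw [sum_restrict hiN (f := fun m => ρ (w k m) * abar m l) (fun m hm => by
          show ρ (w k m) * abar m l = 0
          rw [hwzero k m (by omega), map_zero, zero_mul])]
        refine Finset.sum_congr rfl fun m' _ => ?_
        have h1 : w k (⟨i + (m' : ℕ), by omega⟩ : Fin N)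
            = ((B' ⟨(k : ℕ), hk⟩ m' : ℕ) : ℤ_[p]) := by
          rw [hw, wMat]
          rw [dif_pos ⟨hk, Nat.le_add_right i (m' : ℕ)⟩]
          exact congrArg Nat.cast (congrArg₂ B' (Fin.ext rfl)
            (Fin.ext (show i + (m' : ℕ) - i = (m' : ℕ) by omega)))
        rw [h1, map_natCast, hBval]
        have h8 : Dbar m' ⟨(l : ℕ) - i, hl'⟩ = abar (emb2 m') l := by
          rw [hDbar, Matrix.submatrix_apply, hemb]
        rw [h8]
      calc ρ (M k l) = ρ (a.val k l) - ∑ m, ρ (w k m) * ρ (a.val m l) := by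
            rw [hMentry, map_sub, map_sum]
            congr 1
            exact Finset.sum_congr rfl fun m _ => map_mul ρ _ _
        _ = abar k l - ∑ m, ρ (w k m) * abar m l := rfl
        _ = 0 := by
            rw [hsum, ← Matrix.mul_apply, hBD]
            have h5 : Abar ⟨(k : ℕ), hk⟩ ⟨(l : ℕ) - i, hl'⟩ = abar k l := by
              simp only [hAbar]
              rw [hemb]
            rw [h5, sub_self]
    rw [hρ] at h0
    have hker : M k l ∈ RingHom.ker (PadicInt.toZModPow (p := p) 1) := h0
    rw [PadicInt.ker_toZModPow, Ideal.mem_span_singleton, pow_one] at hker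
    obtain ⟨z, hz⟩ := hker
    exact ⟨z, hz.symm⟩
  have hkey : toQ p M * tMat p N i = tMat p N i * toQ p (cMat p M hcorner) := by
    ext k l
    rw [tMat, Matrix.mul_diagonal, Matrix.diagonal_mul]
    show ((M k l : ℤ_[p]) : ℚ_[p]) * _ = _ * ((cMat p M hcorner k l : ℤ_[p]) : ℚ_[p])
    by_cases hk : (k : ℕ) < i <;> by_cases hl : (l : ℕ) < i
    · rw [if_pos hk, if_pos hl, cMat_mid p M hcorner (by omega) (by omega)]
      ring
    · rw [if_pos hk, if_neg hl]
      have hsp := cMat_spec p M hcorner (k := k) (l := l) hk (by omega)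
      rw [mul_one, ← hsp]
      push_cast
      ring
    · rw [if_neg hk, if_pos hl, cMat_low p M hcorner ⟨hl, by omega⟩]
      push_cast
      ring
    · rw [if_neg hk, if_neg hl, cMat_mid p M hcorner (by omega) (by omega)]
      ring
  have hc0red : ∀ k l, ¬ b k < b l →
      redMat p r (cMat p M hcorner) k l = redMat p r a.val k l := by
    intro k l hbkl
    have hnc : ¬((k : ℕ) < i ∧ i ≤ (l : ℕ)) := fun h => hbkl (hb k l h.1 h.2)
    have hsum0 : ∑ m, PadicInt.toZModPow r (w k m * a.val m l) = 0 := by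
      refine Finset.sum_eq_zero fun m _ => ?_
      by_cases hm : (k : ℕ) < i ∧ i ≤ (m : ℕ)
      · have hli : (l : ℕ) < i := by omega
        have hz : PadicInt.toZModPow r (a.val m l) = 0 := ha.1 (hb l m hli hm.2)
        rw [_root_.map_mul, hz, mul_zero]
      · rw [hwzero k m hm, zero_mul, map_zero]
    have hMred : PadicInt.toZModPow r (M k l) = redMat p r a.val k l := by
      rw [hMentry, map_sub, map_sum, hsum0, sub_zero]
      rfl
    show PadicInt.toZModPow r (cMat p M hcorner k l) = _
    by_cases hlk : (l : ℕ) < i ∧ i ≤ (k : ℕ)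
    · have hz : redMat p r a.val k l = 0 := ha.1 (hb l k hlk.1 hlk.2)
      rw [cMat_low p M hcorner hlk, _root_.map_mul, hMred, hz, mul_zero]
    · rw [cMat_mid p M hcorner hnc hlk, hMred]
  have hc0unip : UnipGen b (redMat p r (cMat p M hcorner)) := UnipGen.congr_lower hc0red ha
  have hdet1 : PadicInt.toZModPow r (cMat p M hcorner).det = 1 := by
    have h6 := hc0unip.det_eq_one
    rw [redMat, ← RingHom.mapMatrix_apply, ← RingHom.map_det] at h6
    exact h6
  have hdetunit : IsUnit (cMat p M hcorner).det := by
    apply isUnit_of_toZModPow_one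
    have h7 := DFunLike.congr_fun (PadicInt.zmod_cast_comp_toZModPow (p := p) 1 r hr)
      (cMat p M hcorner).det
    rw [RingHom.comp_apply] at h7
    rw [← h7, hdet1, _root_.map_one]
  have hc0 : IsUnit (cMat p M hcorner) := (Matrix.isUnit_iff_isUnit_det _).mpr hdetunit
  refine ⟨B', hBlt, hc0.unit, ?_, ?_⟩
  · rw [show (hc0.unit : Matrix (Fin N) (Fin N) ℤ_[p]) = cMat p M hcorner from hc0.unit_spec]
    exact hc0unip
  · rw [show (hc0.unit : Matrix (Fin N) (Fin N) ℤ_[p]) = cMat p M hcorner from hc0.unit_spec]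
    rw [uMat_eq_toQ]
    have h1 : toQ p (1 + w) * toQ p M = toQ p a.val := by
      rw [← toQ_mul]
      congr 1
      rw [hM, ← Matrix.mul_assoc, hw, (one_add_wMat_mul p B').1, Matrix.one_mul]
    calc toQ p a.val * tMat p N i
        = toQ p (1 + w) * (toQ p M * tMat p N i) := by rw [← Matrix.mul_assoc, h1]
      _ = toQ p (1 + w) * (tMat p N i * toQ p (cMat p M hcorner)) := by rw [hkey]
      _ = toQ p (1 + wMat p N i B') * tMat p N i * toQ p (cMat p M hcorner) := by
          rw [hw, Matrix.mul_assoc]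

theorem toQ_one {N : ℕ} : toQ p (1 : Matrix (Fin N) (Fin N) ℤ_[p]) = 1 :=
  Matrix.map_one _ (by norm_cast) (by norm_cast)

theorem wMat_apply_corner {N i : ℕ} (B : Matrix (Fin i) (Fin (N - i)) ℕ)
    (k : Fin i) (l' : Fin (N - i)) (hkN : (k : ℕ) < N) (hlN : i + (l' : ℕ) < N) :
    wMat p N i B ⟨(k : ℕ), hkN⟩ ⟨i + (l' : ℕ), hlN⟩ = ((B k l' : ℕ) : ℤ_[p]) := by
  rw [wMat, dif_pos ⟨k.isLt, Nat.le_add_right _ _⟩]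
  exact congrArg Nat.cast (congrArg₂ B (Fin.ext rfl)
    (Fin.ext (show i + (l' : ℕ) - i = (l' : ℕ) by omega)))

theorem unipGen_red_one {N : ℕ} (b : Fin N → ℕ) (r : ℕ) :
    UnipGen b (redMat p r ((1 : GL (Fin N) ℤ_[p]) : Matrix (Fin N) (Fin N) ℤ_[p])) := by
  rw [Units.val_one, redMat_one]
  exact UnipGen.one b

theorem backward_key {N i : ℕ} (b : Fin N → ℕ)
    (hb : ∀ k l : Fin N, (k : ℕ) < i → i ≤ (l : ℕ) → b k < b l) (r : ℕ)
    (B : Matrix (Fin i) (Fin (N - i)) ℕ) :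
    ∃ a : GL (Fin N) ℤ_[p], UnipGen b (redMat p r a.val) ∧ toQ p a.val = uMat p N i B := by
  refine ⟨⟨1 + wMat p N i B, 1 - wMat p N i B,
    (one_add_wMat_mul p B).1, (one_add_wMat_mul p B).2⟩, ?_, ?_⟩
  · exact unipGen_redMat_one_add_wMat p b hb r B
  · exact (uMat_eq_toQ p B).symm

theorem disjoint_key {N i : ℕ} (hiN : i ≤ N)
    (B₁ B₂ : Matrix (Fin i) (Fin (N - i)) ℕ)
    (h1 : ∀ k l, B₁ k l < p) (h2 : ∀ k l, B₂ k l < p)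
    (c₁ c₂ : GL (Fin N) ℤ_[p])
    (heq : uMat p N i B₁ * tMat p N i * toQ p c₁.val
      = uMat p N i B₂ * tMat p N i * toQ p c₂.val) :
    B₁ = B₂ := by
  haveI : Fact (1 < p ^ 1) := ⟨by simpa using (Fact.out : p.Prime).one_lt⟩
  have hc1 : toQ p c₁.val * toQ p c₁.inv = 1 := by
    rw [← toQ_mul, c₁.val_inv, toQ_one]
  have e2 : uMat p N i B₁ * tMat p N i
      = uMat p N i B₂ * tMat p N i * toQ p (c₂.val * c₁.inv) := by
    calc uMat p N i B₁ * tMat p N i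
        = uMat p N i B₁ * tMat p N i * (toQ p c₁.val * toQ p c₁.inv) := by
          rw [hc1, Matrix.mul_one]
      _ = uMat p N i B₁ * tMat p N i * toQ p c₁.val * toQ p c₁.inv := by
          rw [Matrix.mul_assoc (uMat p N i B₁ * tMat p N i)]
      _ = uMat p N i B₂ * tMat p N i * toQ p c₂.val * toQ p c₁.inv := by rw [heq]
      _ = uMat p N i B₂ * tMat p N i * toQ p (c₂.val * c₁.inv) := by
          rw [toQ_mul, Matrix.mul_assoc (uMat p N i B₂ * tMat p N i)]
  have h4 : (1 - wMat p N i B₂) * (1 + wMat p N i B₁)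
      = 1 + (wMat p N i B₁ - wMat p N i B₂) := by
    have h := wMat_mul_wMat p (N := N) (i := i) B₂ B₁
    have h' : (1 - wMat p N i B₂) * (1 + wMat p N i B₁)
        = 1 + (wMat p N i B₁ - wMat p N i B₂) - wMat p N i B₂ * wMat p N i B₁ := by
      noncomm_ring
    rw [h', h, sub_zero]
  have h5 : toQ p (1 - wMat p N i B₂) * uMat p N i B₂ = 1 := by
    rw [uMat_eq_toQ, ← toQ_mul, (one_add_wMat_mul p B₂).2, toQ_one]
  have e3 : toQ p (1 + (wMat p N i B₁ - wMat p N i B₂)) * tMat p N i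
      = tMat p N i * toQ p (c₂.val * c₁.inv) := by
    calc toQ p (1 + (wMat p N i B₁ - wMat p N i B₂)) * tMat p N i
        = toQ p (1 - wMat p N i B₂) * uMat p N i B₁ * tMat p N i := by
          rw [uMat_eq_toQ, ← toQ_mul, h4]
      _ = toQ p (1 - wMat p N i B₂) * (uMat p N i B₁ * tMat p N i) := by
          rw [Matrix.mul_assoc]
      _ = toQ p (1 - wMat p N i B₂)
          * (uMat p N i B₂ * tMat p N i * toQ p (c₂.val * c₁.inv)) := by rw [e2]
      _ = toQ p (1 - wMat p N i B₂) * uMat p N i B₂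
          * (tMat p N i * toQ p (c₂.val * c₁.inv)) := by
          rw [← Matrix.mul_assoc, ← Matrix.mul_assoc, Matrix.mul_assoc
            (toQ p (1 - wMat p N i B₂) * uMat p N i B₂)]
      _ = tMat p N i * toQ p (c₂.val * c₁.inv) := by rw [h5, Matrix.one_mul]
  ext k l'
  have hkN : (k : ℕ) < N := lt_of_lt_of_le k.isLt hiN
  have hlN : i + (l' : ℕ) < N := by have := l'.isLt; omega
  have e4 := congrFun (congrFun e3 (⟨(k : ℕ), hkN⟩ : Fin N)) (⟨i + (l' : ℕ), hlN⟩ : Fin N)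
  rw [tMat, Matrix.mul_diagonal, Matrix.diagonal_mul] at e4
  rw [if_neg (show ¬ (((⟨i + (l' : ℕ), hlN⟩ : Fin N) : ℕ) < i) by
      show ¬ (i + (l' : ℕ) < i); omega),
    if_pos (show ((⟨(k : ℕ), hkN⟩ : Fin N) : ℕ) < i from k.isLt), mul_one] at e4
  have h9 : (1 + (wMat p N i B₁ - wMat p N i B₂))
        (⟨(k : ℕ), hkN⟩ : Fin N) (⟨i + (l' : ℕ), hlN⟩ : Fin N)
      = ((B₁ k l' : ℕ) : ℤ_[p]) - ((B₂ k l' : ℕ) : ℤ_[p]) := by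
    rw [Matrix.add_apply, Matrix.sub_apply, Matrix.one_apply,
      if_neg (Fin.ne_of_val_ne (show (k : ℕ) ≠ i + (l' : ℕ) by have := k.isLt; omega)),
      wMat_apply_corner, wMat_apply_corner, zero_add]
  have e5 : ((B₁ k l' : ℕ) : ℤ_[p]) - ((B₂ k l' : ℕ) : ℤ_[p])
      = (p : ℤ_[p]) * (c₂.val * c₁.inv) ⟨(k : ℕ), hkN⟩ ⟨i + (l' : ℕ), hlN⟩ := by
    rw [← h9]
    have e4' : (((1 + (wMat p N i B₁ - wMat p N i B₂))
          (⟨(k : ℕ), hkN⟩ : Fin N) (⟨i + (l' : ℕ), hlN⟩ : Fin N) : ℤ_[p]) : ℚ_[p])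
        = (((p : ℤ_[p]) * (c₂.val * c₁.inv) ⟨(k : ℕ), hkN⟩
            ⟨i + (l' : ℕ), hlN⟩ : ℤ_[p]) : ℚ_[p]) := by
      push_cast
      exact e4
    exact Subtype.coe_injective e4'
  have e6 : ((B₁ k l' : ℕ) : ZMod (p ^ 1)) - ((B₂ k l' : ℕ) : ZMod (p ^ 1)) = 0 := by
    have := congrArg (PadicInt.toZModPow (p := p) 1) e5
    rw [map_sub, map_natCast, map_natCast, _root_.map_mul, map_natCast] at this
    rw [this, show ((p : ℕ) : ZMod (p ^ 1)) = 0 from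
      (ZMod.natCast_eq_zero_iff p (p ^ 1)).mpr (by rw [pow_one]), zero_mul]
  have e7 : (((B₁ k l' : ℤ) - (B₂ k l' : ℤ) : ℤ) : ZMod (p ^ 1)) = 0 := by
    push_cast
    push_cast at e6
    exact e6
  have e8 := (ZMod.intCast_zmod_eq_zero_iff_dvd _ (p ^ 1)).mp e7
  rw [Nat.cast_pow, pow_one] at e8
  have hb1 := h1 k l'
  have hb2 := h2 k l'
  have e9 : (B₁ k l' : ℤ) - (B₂ k l' : ℤ) = 0 :=
    Int.eq_zero_of_abs_lt_dvd e8 (abs_lt.mpr ⟨by omega, by omega⟩)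
  omega

theorem Dsum_le {t : ℕ} (nn : Fin t → ℕ) {a b : ℕ} (h : a ≤ b) : Dsum nn a ≤ Dsum nn b :=
  Finset.sum_le_sum_of_subset (Finset.range_subset_range.2 h)

theorem bfun_lt {t : ℕ} (nn : Fin t → ℕ) (j : Fin t) :
    ∀ k l : Fin (Dsum nn t), (k : ℕ) < Dsum nn ((j : ℕ) + 1) →
      Dsum nn ((j : ℕ) + 1) ≤ (l : ℕ) → bfun nn k < bfun nn l := by
  intro k l hk hl
  have hjt := j.isLt
  have h1 : blkOf nn (k : ℕ) ≤ (j : ℕ) := by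
    have hsub : (Finset.range t).filter (fun j' => Dsum nn (j' + 1) ≤ (k : ℕ))
        ⊆ Finset.range (j : ℕ) := by
      intro x hx
      simp only [Finset.mem_filter, Finset.mem_range] at hx ⊢
      by_contra hxj
      exact absurd (le_trans (Dsum_le nn (show (j : ℕ) + 1 ≤ x + 1 by omega)) hx.2)
        (by omega)
    calc blkOf nn (k : ℕ) ≤ (Finset.range (j : ℕ)).card := Finset.card_le_card hsub
      _ = (j : ℕ) := Finset.card_range _
  have h2 : (j : ℕ) + 1 ≤ blkOf nn (l : ℕ) := by
    have hsub : Finset.range ((j : ℕ) + 1)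
        ⊆ (Finset.range t).filter (fun j' => Dsum nn (j' + 1) ≤ (l : ℕ)) := by
      intro x hx
      simp only [Finset.mem_filter, Finset.mem_range] at hx ⊢
      exact ⟨by omega, le_trans (Dsum_le nn (by omega)) hl⟩
    calc (j : ℕ) + 1 = (Finset.range ((j : ℕ) + 1)).card := (Finset.card_range _).symm
      _ ≤ _ := Finset.card_le_card hsub
  show blkOf nn (k : ℕ) < blkOf nn (l : ℕ)
  omega

/-- Matrices with entries `< q` as a type of functions into `Fin q`. -/
def boundedMatrixEquiv (i m q : ℕ) :
    {B : Matrix (Fin i) (Fin m) ℕ // ∀ k l, B k l < q} ≃ (Fin i → Fin m → Fin q) where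
  toFun B := fun k l => ⟨B.1 k l, B.2 k l⟩
  invFun f := ⟨fun k l => (f k l : ℕ), fun k l => (f k l).isLt⟩
  left_inv B := rfl
  right_inv f := rfl

end Aux

/-- The double coset `I_r t_i I_r` is the disjoint union of the left
cosets `u(B')·t_i·I_r` over the `p^{i(n−i)}` matrices `B'` with entries in
`{0, …, p−1}`; in particular it consists of exactly `p^{i(n−i)}` distinct left cosets
of `I_r`. -/
theorem double_coset_decomposition {t : ℕ} (nn : Fin t → ℕ) (hpos : ∀ j, 0 < nn j)
    (r : ℕ) (hr : 1 ≤ r) (j : Fin t) :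
    -- the double coset is the union of the cosets `u(B')·t_i·I_r`
    (∀ x : Matrix (Fin (Dsum nn t)) (Fin (Dsum nn t)) ℚ_[p],
      (∃ a b : GL (Fin (Dsum nn t)) ℤ_[p], memIw p nn r a ∧ memIw p nn r b ∧
          x = toQ p a.val * tMat p (Dsum nn t) (Dsum nn ((j : ℕ) + 1)) * toQ p b.val) ↔
        (∃ (B' : Matrix (Fin (Dsum nn ((j : ℕ) + 1)))
              (Fin (Dsum nn t - Dsum nn ((j : ℕ) + 1))) ℕ),
          (∀ k l, B' k l < p) ∧
          ∃ c : GL (Fin (Dsum nn t)) ℤ_[p], memIw p nn r c ∧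
            x = uMat p (Dsum nn t) (Dsum nn ((j : ℕ) + 1)) B' *
              tMat p (Dsum nn t) (Dsum nn ((j : ℕ) + 1)) * toQ p c.val)) ∧
    -- the union is disjoint: distinct representatives give disjoint left cosets
    (∀ (B₁ B₂ : Matrix (Fin (Dsum nn ((j : ℕ) + 1)))
        (Fin (Dsum nn t - Dsum nn ((j : ℕ) + 1))) ℕ),
      (∀ k l, B₁ k l < p) → (∀ k l, B₂ k l < p) →
      ∀ c₁ c₂ : GL (Fin (Dsum nn t)) ℤ_[p], memIw p nn r c₁ → memIw p nn r c₂ →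
        uMat p (Dsum nn t) (Dsum nn ((j : ℕ) + 1)) B₁ *
            tMat p (Dsum nn t) (Dsum nn ((j : ℕ) + 1)) * toQ p c₁.val =
          uMat p (Dsum nn t) (Dsum nn ((j : ℕ) + 1)) B₂ *
            tMat p (Dsum nn t) (Dsum nn ((j : ℕ) + 1)) * toQ p c₂.val →
        B₁ = B₂) ∧
    -- there are exactly `p^{i·(n−i)}` distinct left cosets
    Set.ncard {S : Set (Matrix (Fin (Dsum nn t)) (Fin (Dsum nn t)) ℚ_[p]) |
        ∃ (B' : Matrix (Fin (Dsum nn ((j : ℕ) + 1)))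
            (Fin (Dsum nn t - Dsum nn ((j : ℕ) + 1))) ℕ),
          (∀ k l, B' k l < p) ∧
          S = {x | ∃ c : GL (Fin (Dsum nn t)) ℤ_[p], memIw p nn r c ∧
            x = uMat p (Dsum nn t) (Dsum nn ((j : ℕ) + 1)) B' *
              tMat p (Dsum nn t) (Dsum nn ((j : ℕ) + 1)) * toQ p c.val}} =
      p ^ (Dsum nn ((j : ℕ) + 1) * (Dsum nn t - Dsum nn ((j : ℕ) + 1))) := by
  have hiN : Dsum nn ((j : ℕ) + 1) ≤ Dsum nn t := Dsum_le nn (by have := j.isLt; omega)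
  have hb := bfun_lt nn j
  have hone : memIw p nn r 1 := unipGen_red_one p (bfun nn) r
  refine ⟨?_, ?_, ?_⟩
  · intro x
    constructor
    · rintro ⟨a, b', haIw, hbIw, rfl⟩
      obtain ⟨B', hB', c, hc, hac⟩ := forward_key p hiN (bfun nn) hb r hr a haIw
      refine ⟨B', hB', c * b', ?_, ?_⟩
      · show UnipGen (bfun nn) (redMat p r ((c * b') : GL (Fin (Dsum nn t)) ℤ_[p]).val)
        rw [Units.val_mul, redMat_mul]
        exact UnipGen.mul hc hbIw
      · rw [Units.val_mul, toQ_mul, ← Matrix.mul_assoc, ← hac]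
    · rintro ⟨B', hB', c, hc, rfl⟩
      obtain ⟨a, haU, haQ⟩ := backward_key p (bfun nn) hb r B'
      exact ⟨a, c, haU, hc, by rw [haQ]⟩
  · intro B₁ B₂ h1 h2 c₁ c₂ _ _ heq
    exact disjoint_key p hiN B₁ B₂ h1 h2 c₁ c₂ heq
  · classical
    have hset : {S : Set (Matrix (Fin (Dsum nn t)) (Fin (Dsum nn t)) ℚ_[p]) |
        ∃ (B' : Matrix (Fin (Dsum nn ((j : ℕ) + 1)))
            (Fin (Dsum nn t - Dsum nn ((j : ℕ) + 1))) ℕ),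
          (∀ k l, B' k l < p) ∧
          S = {x | ∃ c : GL (Fin (Dsum nn t)) ℤ_[p], memIw p nn r c ∧
            x = uMat p (Dsum nn t) (Dsum nn ((j : ℕ) + 1)) B' *
              tMat p (Dsum nn t) (Dsum nn ((j : ℕ) + 1)) * toQ p c.val}}
        = (fun B' : Matrix (Fin (Dsum nn ((j : ℕ) + 1)))
            (Fin (Dsum nn t - Dsum nn ((j : ℕ) + 1))) ℕ =>
            {x : Matrix (Fin (Dsum nn t)) (Fin (Dsum nn t)) ℚ_[p] |
              ∃ c : GL (Fin (Dsum nn t)) ℤ_[p], memIw p nn r c ∧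
                x = uMat p (Dsum nn t) (Dsum nn ((j : ℕ) + 1)) B' *
                  tMat p (Dsum nn t) (Dsum nn ((j : ℕ) + 1)) * toQ p c.val})
          '' {B' | ∀ k l, B' k l < p} := by
      ext S
      constructor
      · rintro ⟨B', hB', rfl⟩
        exact ⟨B', hB', rfl⟩
      · rintro ⟨B', hB', rfl⟩
        exact ⟨B', hB', rfl⟩
    rw [hset]
    have hinj : Set.InjOn (fun B' : Matrix (Fin (Dsum nn ((j : ℕ) + 1)))
            (Fin (Dsum nn t - Dsum nn ((j : ℕ) + 1))) ℕ =>
            {x : Matrix (Fin (Dsum nn t)) (Fin (Dsum nn t)) ℚ_[p] |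
              ∃ c : GL (Fin (Dsum nn t)) ℤ_[p], memIw p nn r c ∧
                x = uMat p (Dsum nn t) (Dsum nn ((j : ℕ) + 1)) B' *
                  tMat p (Dsum nn t) (Dsum nn ((j : ℕ) + 1)) * toQ p c.val})
        {B' | ∀ k l, B' k l < p} := by
      intro B₁ hB₁ B₂ hB₂ hΦ
      simp only [Set.mem_setOf_eq] at hB₁ hB₂
      have hx : uMat p (Dsum nn t) (Dsum nn ((j : ℕ) + 1)) B₁ *
            tMat p (Dsum nn t) (Dsum nn ((j : ℕ) + 1)) *
            toQ p ((1 : GL (Fin (Dsum nn t)) ℤ_[p]) : Matrix _ _ ℤ_[p])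
          ∈ {x : Matrix (Fin (Dsum nn t)) (Fin (Dsum nn t)) ℚ_[p] |
              ∃ c : GL (Fin (Dsum nn t)) ℤ_[p], memIw p nn r c ∧
                x = uMat p (Dsum nn t) (Dsum nn ((j : ℕ) + 1)) B₁ *
                  tMat p (Dsum nn t) (Dsum nn ((j : ℕ) + 1)) * toQ p c.val} :=
        ⟨1, hone, rfl⟩
      rw [show ({x : Matrix (Fin (Dsum nn t)) (Fin (Dsum nn t)) ℚ_[p] |
              ∃ c : GL (Fin (Dsum nn t)) ℤ_[p], memIw p nn r c ∧
                x = uMat p (Dsum nn t) (Dsum nn ((j : ℕ) + 1)) B₁ *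
                  tMat p (Dsum nn t) (Dsum nn ((j : ℕ) + 1)) * toQ p c.val})
          = {x : Matrix (Fin (Dsum nn t)) (Fin (Dsum nn t)) ℚ_[p] |
              ∃ c : GL (Fin (Dsum nn t)) ℤ_[p], memIw p nn r c ∧
                x = uMat p (Dsum nn t) (Dsum nn ((j : ℕ) + 1)) B₂ *
                  tMat p (Dsum nn t) (Dsum nn ((j : ℕ) + 1)) * toQ p c.val} from hΦ] at hx
      obtain ⟨c₂, _, heq⟩ := hx
      exact disjoint_key p hiN B₁ B₂ hB₁ hB₂ 1 c₂ heq
    rw [Set.ncard_image_of_injOn hinj, ← Nat.card_coe_set_eq]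
    have hc2 : Nat.card {B : Matrix (Fin (Dsum nn ((j : ℕ) + 1)))
          (Fin (Dsum nn t - Dsum nn ((j : ℕ) + 1))) ℕ // ∀ k l, B k l < p}
        = p ^ (Dsum nn ((j : ℕ) + 1) * (Dsum nn t - Dsum nn ((j : ℕ) + 1))) := by
      rw [Nat.card_congr (boundedMatrixEquiv _ _ p), Nat.card_eq_fintype_card]
      simp only [Fintype.card_fun, Fintype.card_fin]
      rw [← pow_mul, Nat.mul_comm]
    exact hc2

end PIw
end
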